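/- arXiv:1903.12485 — 3 statements merged into one kernel-verified Lean document; each statement's English description precedes it below -/
import Mathlib

section
/- For real numbers τ < t ≤ T and x ∈ ℝⁿ with |x| ≤ √(T-t), there exists a constant C = C(n) > 0 such that ∫_{|ξ| < √(T-τ)} (4π(t-τ))^{-n/2} exp(-|x-ξ|²/(4(t-τ))) dξ ≥ C. -/
open Real MeasureTheory

theorem stmt_4 (n : ℕ) (hn : 1 ≤ n) :
    ∃ C : ℝ, 0 < C ∧ ∀ (x : EuclideanSpace ℝ (Fin n)) (τ t T : ℝ),
      τ < t → t ≤ T → ‖x‖ ≤ Real.sqrt (T - t) →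
      C ≤ ∫ ξ in {ξ : EuclideanSpace ℝ (Fin n) | ‖ξ‖ < Real.sqrt (T - τ)},
        (4 * Real.pi * (t - τ)) ^ (-(n : ℝ) / 2) *
          Real.exp (-‖x - ξ‖ ^ 2 / (4 * (t - τ))) := by
  set E := EuclideanSpace ℝ (Fin n) with hE
  have hne : Nontrivial E :=
    ⟨EuclideanSpace.single ⟨0, hn⟩ 1, 0, fun h => (one_ne_zero (α := ℝ)) (by
      have := congrArg (fun v : E => v ⟨0, hn⟩) h
      simpa [EuclideanSpace.single_apply] using this)⟩
  set B₁ : ℝ := (volume (Metric.ball (0 : E) 1)).toReal with hB₁def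
  have hB₁fin : volume (Metric.ball (0 : E) 1) ≠ ⊤ := measure_ball_lt_top.ne
  have hB₁pos : 0 < B₁ := ENNReal.toReal_pos (Metric.measure_ball_pos _ _ one_pos).ne' hB₁fin
  have hπ : (0 : ℝ) < 4 * Real.pi := by positivity
  refine ⟨(4 * Real.pi) ^ (-(n : ℝ) / 2) * Real.exp (-(1/4)) * (B₁ / 2), by positivity, ?_⟩
  intro x τ t T hτt htT hx
  set s : ℝ := t - τ with hsdef
  have hs0 : 0 < s := sub_pos.2 hτt
  set r : ℝ := Real.sqrt s with hrdef
  have hr0 : 0 < r := Real.sqrt_pos.2 hs0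
  have hr2 : r ^ 2 = s := Real.sq_sqrt hs0.le
  have hTt : (0 : ℝ) ≤ T - t := sub_nonneg.2 htT
  -- the sets
  set S : Set E := {ξ : E | ‖ξ‖ < Real.sqrt (T - τ)} with hSdef
  set A : Set E := Metric.ball x r ∩ {ξ : E | inner ℝ x (ξ - x) ≤ (0 : ℝ)} with hAdef
  have hAmeas : MeasurableSet A :=
    measurableSet_ball.inter
      (isClosed_le (Continuous.inner continuous_const (continuous_id.sub continuous_const))
        continuous_const).measurableSet
  have hAsub : A ⊆ S := by
    rintro ξ ⟨h1, h2⟩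
    have hxi : ‖ξ - x‖ < r := by rwa [Metric.mem_ball, dist_eq_norm] at h1
    have hxi2 : ‖ξ - x‖ ^ 2 < s := by
      calc ‖ξ - x‖ ^ 2 < r ^ 2 := by
            apply sq_lt_sq' _ hxi; linarith [norm_nonneg (ξ - x)]
        _ = s := hr2
    have hx2 : ‖x‖ ^ 2 ≤ T - t := by
      calc ‖x‖ ^ 2 ≤ Real.sqrt (T - t) ^ 2 :=
            pow_le_pow_left₀ (norm_nonneg x) hx 2
        _ = T - t := Real.sq_sqrt hTt
    have hnorm : ‖ξ‖ ^ 2 < T - τ := by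
      have hexp : ‖ξ‖ ^ 2 = ‖x‖ ^ 2 + 2 * (inner ℝ x (ξ - x) : ℝ) + ‖ξ - x‖ ^ 2 := by
        have hxi' : x + (ξ - x) = ξ := by abel
        calc ‖ξ‖ ^ 2 = ‖x + (ξ - x)‖ ^ 2 := by rw [hxi']
          _ = _ := norm_add_sq_real x (ξ - x)
      have h2' : (inner ℝ x (ξ - x) : ℝ) ≤ 0 := h2
      rw [hexp]; linarith
    exact Real.lt_sqrt_of_sq_lt hnorm
  -- measure of A
  have hAfin : volume A ≠ ⊤ :=
    ((measure_mono Set.inter_subset_left).trans_lt measure_ball_lt_top).ne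
  set A₀ : Set E := Metric.ball 0 r ∩ {z : E | inner ℝ x z ≤ (0 : ℝ)} with hA₀def
  have hAtrans : A = (· + (-x)) ⁻¹' A₀ := by
    ext ξ
    simp only [hAdef, hA₀def, Set.mem_inter_iff, Set.mem_preimage, Metric.mem_ball,
      Set.mem_setOf_eq, dist_eq_norm, ← sub_eq_add_neg, sub_zero]
    exact Iff.and (by rw [dist_eq_norm]) Iff.rfl
  have hvolA : volume A = volume A₀ := by
    rw [hAtrans, measure_preimage_add_right]
  have hneg : -A₀ = Metric.ball (0 : E) r ∩ {z : E | (0:ℝ) ≤ inner ℝ x z} := by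
    ext z
    simp only [Set.mem_neg, hA₀def, Set.mem_inter_iff, Metric.mem_ball, dist_zero_right,
      norm_neg, Set.mem_setOf_eq, inner_neg_right, neg_nonpos]
  have hhalf : volume (Metric.ball (0:E) r) ≤ 2 * volume A₀ := by
    have hcover : Metric.ball (0:E) r ⊆ A₀ ∪ -A₀ := by
      intro z hz
      rcases le_total (@inner ℝ _ _ x z) 0 with h | h
      · exact Or.inl ⟨hz, h⟩
      · exact Or.inr (by rw [hneg]; exact ⟨hz, h⟩)
    calc volume (Metric.ball (0:E) r) ≤ volume (A₀ ∪ -A₀) := measure_mono hcover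
      _ ≤ volume A₀ + volume (-A₀) := measure_union_le _ _
      _ = 2 * volume A₀ := by rw [Measure.measure_neg, two_mul]
  have hA₀fin : volume A₀ ≠ ⊤ :=
    ((measure_mono Set.inter_subset_left).trans_lt measure_ball_lt_top).ne
  have hballr : volume (Metric.ball (0:E) r)
      = ENNReal.ofReal (r ^ n) * volume (Metric.ball (0:E) 1) := by
    rw [Measure.addHaar_ball _ _ hr0.le]
    congr 2
    exact congrArg (fun k => r ^ k) (@finrank_euclideanSpace_fin ℝ _ n)
  have hvolA_lb : r ^ n * B₁ / 2 ≤ (volume A).toReal := by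
    have h2 : (volume (Metric.ball (0:E) r)).toReal = r ^ n * B₁ := by
      rw [hballr, ENNReal.toReal_mul, ENNReal.toReal_ofReal (by positivity), hB₁def]
    have h3 : (volume (Metric.ball (0:E) r)).toReal ≤ 2 * (volume A₀).toReal := by
      have hfin2 : (2 : ENNReal) * volume A₀ ≠ ⊤ :=
        ENNReal.mul_ne_top (by norm_num) hA₀fin
      have := ENNReal.toReal_mono hfin2 hhalf
      rwa [ENNReal.toReal_mul, ENNReal.toReal_ofNat] at this
    rw [hvolA]
    linarith [h2 ▸ h3]
  -- the integrand
  have hSball : S = Metric.ball (0:E) (Real.sqrt (T - τ)) := by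
    ext ξ; simp [hSdef, Metric.mem_ball, dist_zero_right]
  have hSmeas : MeasurableSet S := hSball ▸ measurableSet_ball
  have hSfin : volume S ≠ ⊤ := by
    rw [hSball]; exact measure_ball_lt_top.ne
  set f : E → ℝ :=
    fun ξ => (4 * Real.pi * s) ^ (-(n:ℝ)/2) * Real.exp (-‖x - ξ‖^2 / (4*s)) with hfdef
  have hf_cont : Continuous f := by
    apply continuous_const.mul
    exact Real.continuous_exp.comp (by fun_prop)
  have hf_nonneg : ∀ ξ, 0 ≤ f ξ := fun ξ => by
    have h1 : (0:ℝ) < (4 * Real.pi * s) ^ (-(n:ℝ)/2) := Real.rpow_pos_of_pos (by positivity) _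
    positivity
  have hf_le : ∀ ξ, f ξ ≤ (4 * Real.pi * s) ^ (-(n:ℝ)/2) := by
    intro ξ
    have h1 : Real.exp (-‖x - ξ‖^2 / (4*s)) ≤ 1 := by
      apply Real.exp_le_one_iff.2
      have : (0:ℝ) ≤ ‖x - ξ‖^2 / (4*s) := by positivity
      linarith [neg_div (4*s) (‖x - ξ‖^2)]
    have h2 : (0:ℝ) ≤ (4 * Real.pi * s) ^ (-(n:ℝ)/2) :=
      (Real.rpow_pos_of_pos (by positivity) _).le
    calc f ξ ≤ (4 * Real.pi * s) ^ (-(n:ℝ)/2) * 1 := mul_le_mul_of_nonneg_left h1 h2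
      _ = _ := mul_one _
  have hfS : IntegrableOn f S := by
    apply Measure.integrableOn_of_bounded hSfin hf_cont.aestronglyMeasurable
      (M := (4 * Real.pi * s) ^ (-(n:ℝ)/2))
    filter_upwards with ξ
    rw [Real.norm_eq_abs, abs_of_nonneg (hf_nonneg ξ)]
    exact hf_le ξ
  have hbound : ∀ ξ ∈ A,
      (4 * Real.pi * s) ^ (-(n:ℝ)/2) * Real.exp (-(1/4)) ≤ f ξ := by
    rintro ξ ⟨h1, _⟩
    have hxi : ‖ξ - x‖ < r := by rwa [Metric.mem_ball, dist_eq_norm] at h1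
    have hxi2 : ‖x - ξ‖ ^ 2 ≤ s := by
      rw [norm_sub_rev]
      nlinarith [norm_nonneg (ξ - x), hr2]
    have hexp : Real.exp (-(1/4)) ≤ Real.exp (-‖x - ξ‖^2 / (4*s)) := by
      apply Real.exp_le_exp.2
      rw [neg_div, neg_le_neg_iff, div_le_div_iff₀ (by positivity) (by norm_num : (0:ℝ) < 4)]
      linarith
    exact mul_le_mul_of_nonneg_left hexp (Real.rpow_pos_of_pos (by positivity) _).le
  have key : (4 * Real.pi * s) ^ (-(n:ℝ)/2) * Real.exp (-(1/4)) * (volume A).toReal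
      ≤ ∫ ξ in A, f ξ :=
    by rw [mul_comm, ← smul_eq_mul, ← measureReal_def]; exact setIntegral_ge_of_const_le hAmeas hAfin hbound (hfS.mono_set hAsub)
  have mono : ∫ ξ in A, f ξ ≤ ∫ ξ in S, f ξ :=
    setIntegral_mono_set hfS (Filter.Eventually.of_forall hf_nonneg)
      (HasSubset.Subset.eventuallyLE hAsub)
  -- arithmetic
  have hb1 : s ^ (-(n:ℝ)/2) * r ^ n = 1 := by
    have hrn : (r:ℝ) ^ n = s ^ ((n:ℝ)/2) := by
      rw [hrdef, Real.sqrt_eq_rpow, ← Real.rpow_natCast (s ^ ((1:ℝ)/2)) n,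
        ← Real.rpow_mul hs0.le]
      congr 1
      ring
    have h0 : (-(n:ℝ)/2 + (n:ℝ)/2) = 0 := by ring
    rw [hrn, ← Real.rpow_add hs0, h0, Real.rpow_zero]
  have hc : (4 * Real.pi * s) ^ (-(n:ℝ)/2)
      = (4 * Real.pi) ^ (-(n:ℝ)/2) * s ^ (-(n:ℝ)/2) :=
    Real.mul_rpow hπ.le hs0.le
  have hCle : (4 * Real.pi) ^ (-(n:ℝ)/2) * Real.exp (-(1/4)) * (B₁ / 2)
      ≤ (4 * Real.pi * s) ^ (-(n:ℝ)/2) * Real.exp (-(1/4)) * (volume A).toReal := by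
    have heq : (4 * Real.pi * s) ^ (-(n:ℝ)/2) * Real.exp (-(1/4)) * (r ^ n * B₁ / 2)
        = (4 * Real.pi) ^ (-(n:ℝ)/2) * Real.exp (-(1/4)) * (B₁ / 2) := by
      rw [hc]
      calc (4 * Real.pi) ^ (-(n:ℝ)/2) * s ^ (-(n:ℝ)/2) * Real.exp (-(1/4)) * (r ^ n * B₁ / 2)
          = (s ^ (-(n:ℝ)/2) * r ^ n) *
            ((4 * Real.pi) ^ (-(n:ℝ)/2) * Real.exp (-(1/4)) * (B₁ / 2)) := by ring
        _ = _ := by rw [hb1, one_mul]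
    rw [← heq]
    apply mul_le_mul_of_nonneg_left hvolA_lb
    exact mul_nonneg (Real.rpow_pos_of_pos (by positivity) _).le (Real.exp_pos _).le
  calc (4 * Real.pi) ^ (-(n:ℝ)/2) * Real.exp (-(1/4)) * (B₁ / 2)
      ≤ (4 * Real.pi * s) ^ (-(n:ℝ)/2) * Real.exp (-(1/4)) * (volume A).toReal := hCle
    _ ≤ ∫ ξ in A, f ξ := key
    _ ≤ ∫ ξ in S, f ξ := mono
end

section
/- Let λ, σ, α, β > 0 with λσ < 1, and set γ₁ = (β+ασ)λ/(1-λσ), γ₂ = (α+βλ)σ/(1-λσ), M₁ = Γ(γ₁+1)Γ(γ₂+1)^{1/σ} / (Γ(α+γ₁+1)Γ(β+γ₂+1)^{1/σ}). Define F(t) = M₁^{λσ/(1-λσ)} t^{γ₁} for t > 0 and F(t) = 0 for t ≤ 0, and G(t) = M₂^{λσ/(1-λσ)} t^{γ₂} for t > 0 and 0 for t ≤ 0, where M₂ = Γ(γ₂+1)Γ(γ₁+1)^{1/λ}/(Γ(β+γ₂+1)Γ(α+γ₁+1)^{1/λ}). Then for all t > 0: ∫₀ᵗ ((t-τ)^{α-1}/Γ(α))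 F(τ) dτ = G(t)^{1/σ} and ∫₀ᵗ ((t-τ)^{β-1}/Γ(β)) G(τ) dτ = F(t)^{1/λ}. -/
open Real MeasureTheory

lemma real_beta {a b t : ℝ} (ha : 0 < a) (hb : 0 < b) (ht : 0 < t) :
    ∫ τ in Set.Ioo (0:ℝ) t, (t - τ) ^ (a - 1) * τ ^ (b - 1)
      = Real.Gamma a * Real.Gamma b / Real.Gamma (a + b) * t ^ (a + b - 1) := by
  have h1 : (∫ x in (0:ℝ)..t, (x:ℂ) ^ ((b:ℂ) - 1) * ((t:ℂ) - x) ^ ((a:ℂ) - 1))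
      = ((∫ x in (0:ℝ)..t, x ^ (b - 1) * (t - x) ^ (a - 1) : ℝ) : ℂ) := by
    rw [← intervalIntegral.integral_ofReal]
    refine intervalIntegral.integral_congr fun x hx => ?_
    rw [Set.uIcc_of_le ht.le] at hx
    obtain ⟨h0, h1⟩ := hx
    push_cast [Complex.ofReal_cpow h0, Complex.ofReal_cpow (show (0:ℝ) ≤ t - x by linarith)]
    ring
  have h2 := Complex.betaIntegral_scaled (b:ℂ) (a:ℂ) ht
  have hbeta : Complex.betaIntegral (b:ℂ) (a:ℂ)
      = ((Real.Gamma a * Real.Gamma b / Real.Gamma (a + b) : ℝ) : ℂ) := by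
    have h3 := Complex.Gamma_mul_Gamma_eq_betaIntegral (s := (b:ℂ)) (t := (a:ℂ))
      (by simpa using hb) (by simpa using ha)
    rw [show ((b:ℂ) + a) = ((b + a : ℝ) : ℂ) by push_cast; ring] at h3
    simp only [Complex.Gamma_ofReal] at h3
    have hne : ((Real.Gamma (b + a) : ℝ) : ℂ) ≠ 0 := by
      exact_mod_cast (Real.Gamma_pos_of_pos (by linarith : (0:ℝ) < b + a)).ne'
    rw [add_comm a b]
    push_cast
    rw [eq_div_iff hne]
    linear_combination -h3
  have h4 : ((t:ℂ)) ^ ((b:ℂ) + a - 1) = ((t ^ (b + a - 1) : ℝ) : ℂ) := by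
    rw [Complex.ofReal_cpow ht.le]; push_cast; ring_nf
  rw [h1, hbeta, h4, ← Complex.ofReal_mul] at h2
  have h5 : (∫ x in (0:ℝ)..t, x ^ (b - 1) * (t - x) ^ (a - 1) : ℝ)
      = t ^ (b + a - 1) * (Real.Gamma a * Real.Gamma b / Real.Gamma (a + b)) :=
    Complex.ofReal_inj.mp h2
  rw [intervalIntegral.integral_of_le ht.le, MeasureTheory.integral_Ioc_eq_integral_Ioo] at h5
  have hc : ∀ τ:ℝ, (t - τ) ^ (a-1) * τ ^ (b-1) = τ ^ (b-1) * (t-τ)^(a-1) :=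
    fun τ => mul_comm _ _
  simp_rw [hc, h5, add_comm b a]; ring

lemma aux_int (α γ₁ γ₂ σ c₁ c₂ : ℝ) (hα : 0 < α) (hγ₁ : 0 < γ₁) (hσ : 0 < σ)
    (hsum : γ₂ * (1/σ) = α + γ₁) (hc₂ : 0 ≤ c₂)
    (hconst : c₁ * (Real.Gamma (γ₁+1) / Real.Gamma (α+γ₁+1)) = c₂ ^ (1/σ))
    {t : ℝ} (ht : 0 < t) :
    (∫ τ in Set.Ioo (0:ℝ) t, (t - τ) ^ (α - 1) / Real.Gamma α * (c₁ * τ ^ γ₁))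
      = (c₂ * t ^ γ₂) ^ (1/σ) := by
  have hb : (0:ℝ) < γ₁ + 1 := by linarith
  have hΓα : 0 < Real.Gamma α := Real.Gamma_pos_of_pos hα
  have hint := real_beta hα hb ht
  have hc : ∀ τ:ℝ, (t - τ) ^ (α - 1) / Real.Gamma α * (c₁ * τ ^ γ₁)
      = (c₁ / Real.Gamma α) * ((t - τ) ^ (α - 1) * τ ^ ((γ₁+1) - 1)) := by
    intro τ; rw [show γ₁+1-1 = γ₁ by ring]; ring
  simp_rw [hc]
  rw [MeasureTheory.integral_const_mul, hint,
    Real.mul_rpow hc₂ (Real.rpow_nonneg ht.le _), ← Real.rpow_mul ht.le, hsum, ← hconst,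
    show α + (γ₁+1) = α + γ₁ + 1 by ring, show α + γ₁ + 1 - 1 = α + γ₁ by ring]
  field_simp

theorem stmt_9 (l σ α β : ℝ) (hl : 0 < l) (hσ : 0 < σ) (hα : 0 < α) (hβ : 0 < β)
    (hls : l * σ < 1)
    (γ₁ γ₂ M₁ M₂ : ℝ)
    (hγ₁ : γ₁ = (β + α * σ) * l / (1 - l * σ))
    (hγ₂ : γ₂ = (α + β * l) * σ / (1 - l * σ))
    (hM₁ : M₁ = Real.Gamma (γ₁ + 1) * Real.Gamma (γ₂ + 1) ^ (1 / σ) /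
      (Real.Gamma (α + γ₁ + 1) * Real.Gamma (β + γ₂ + 1) ^ (1 / σ)))
    (hM₂ : M₂ = Real.Gamma (γ₂ + 1) * Real.Gamma (γ₁ + 1) ^ (1 / l) /
      (Real.Gamma (β + γ₂ + 1) * Real.Gamma (α + γ₁ + 1) ^ (1 / l)))
    (F G : ℝ → ℝ)
    (hF : ∀ t, F t = if 0 < t then M₁ ^ (l * σ / (1 - l * σ)) * t ^ γ₁ else 0)
    (hG : ∀ t, G t = if 0 < t then M₂ ^ (l * σ / (1 - l * σ)) * t ^ γ₂ else 0) :
    ∀ t > 0,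
      (∫ τ in Set.Ioo (0:ℝ) t, (t - τ) ^ (α - 1) / Real.Gamma α * F τ) = G t ^ (1 / σ) ∧
      (∫ τ in Set.Ioo (0:ℝ) t, (t - τ) ^ (β - 1) / Real.Gamma β * G τ) = F t ^ (1 / l) := by
  have h1ls : (0:ℝ) < 1 - l * σ := by linarith
  have hγ₁pos : 0 < γ₁ := by rw [hγ₁]; apply div_pos (by positivity) h1ls
  have hγ₂pos : 0 < γ₂ := by rw [hγ₂]; apply div_pos (by positivity) h1ls
  have hApos : 0 < Real.Gamma (γ₁ + 1) := Real.Gamma_pos_of_pos (by linarith)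
  have hBpos : 0 < Real.Gamma (α + γ₁ + 1) := Real.Gamma_pos_of_pos (by linarith)
  have hCpos : 0 < Real.Gamma (γ₂ + 1) := Real.Gamma_pos_of_pos (by linarith)
  have hDpos : 0 < Real.Gamma (β + γ₂ + 1) := Real.Gamma_pos_of_pos (by linarith)
  have hM₁pos : 0 < M₁ := by rw [hM₁]; positivity
  have hM₂pos : 0 < M₂ := by rw [hM₂]; positivity
  have hlM₁ : Real.log M₁ = Real.log (Real.Gamma (γ₁+1)) + (1/σ) * Real.log (Real.Gamma (γ₂+1))
      - (Real.log (Real.Gamma (α+γ₁+1)) + (1/σ) * Real.log (Real.Gamma (β+γ₂+1))) := by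
    rw [hM₁, Real.log_div (by positivity) (by positivity),
      Real.log_mul hApos.ne' (by positivity), Real.log_mul hBpos.ne' (by positivity),
      Real.log_rpow hCpos, Real.log_rpow hDpos]
  have hlM₂ : Real.log M₂ = Real.log (Real.Gamma (γ₂+1)) + (1/l) * Real.log (Real.Gamma (γ₁+1))
      - (Real.log (Real.Gamma (β+γ₂+1)) + (1/l) * Real.log (Real.Gamma (α+γ₁+1))) := by
    rw [hM₂, Real.log_div (by positivity) (by positivity),
      Real.log_mul hCpos.ne' (by positivity), Real.log_mul hDpos.ne' (by positivity),
      Real.log_rpow hApos, Real.log_rpow hBpos]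
  have e₁pos : 0 < M₁ ^ (l * σ / (1 - l * σ)) := Real.rpow_pos_of_pos hM₁pos _
  have e₂pos : 0 < M₂ ^ (l * σ / (1 - l * σ)) := Real.rpow_pos_of_pos hM₂pos _
  have hconst₁ : M₁ ^ (l * σ / (1 - l * σ)) * (Real.Gamma (γ₁+1) / Real.Gamma (α+γ₁+1))
      = (M₂ ^ (l * σ / (1 - l * σ))) ^ (1/σ) := by
    refine Real.log_injOn_pos (Set.mem_Ioi.mpr (by positivity))
      (Set.mem_Ioi.mpr (by positivity)) ?_
    rw [Real.log_mul e₁pos.ne' (by positivity), Real.log_rpow hM₁pos,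
      Real.log_rpow e₂pos, Real.log_rpow hM₂pos,
      Real.log_div hApos.ne' hBpos.ne', hlM₁, hlM₂]
    field_simp
    ring
  have hconst₂ : M₂ ^ (l * σ / (1 - l * σ)) * (Real.Gamma (γ₂+1) / Real.Gamma (β+γ₂+1))
      = (M₁ ^ (l * σ / (1 - l * σ))) ^ (1/l) := by
    refine Real.log_injOn_pos (Set.mem_Ioi.mpr (by positivity))
      (Set.mem_Ioi.mpr (by positivity)) ?_
    rw [Real.log_mul e₂pos.ne' (by positivity), Real.log_rpow hM₂pos,
      Real.log_rpow e₁pos, Real.log_rpow hM₁pos,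
      Real.log_div hCpos.ne' hDpos.ne', hlM₁, hlM₂]
    field_simp
    ring
  have hsum₁ : γ₂ * (1/σ) = α + γ₁ := by
    rw [hγ₁, hγ₂]; field_simp; ring
  have hsum₂ : γ₁ * (1/l) = β + γ₂ := by
    rw [hγ₁, hγ₂]; field_simp
    have h : (1 - σ * l) * (1 - σ * l)⁻¹ = 1 :=
      mul_inv_cancel₀ (by linarith [mul_comm σ l] : (0:ℝ) < 1 - σ * l).ne'
    linear_combination β * h
  intro t ht
  constructor
  · have hcong : (∫ τ in Set.Ioo (0:ℝ) t, (t - τ) ^ (α - 1) / Real.Gamma α * F τ)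
        = ∫ τ in Set.Ioo (0:ℝ) t,
            (t - τ) ^ (α - 1) / Real.Gamma α * (M₁ ^ (l * σ / (1 - l * σ)) * τ ^ γ₁) := by
      refine MeasureTheory.setIntegral_congr_fun measurableSet_Ioo fun τ hτ => ?_
      rw [hF]; simp [hτ.1]
    rw [hcong, hG t, if_pos ht]
    exact aux_int α γ₁ γ₂ σ _ _ hα hγ₁pos hσ hsum₁ e₂pos.le hconst₁ ht
  · have hcong : (∫ τ in Set.Ioo (0:ℝ) t, (t - τ) ^ (β - 1) / Real.Gamma β * G τ)
        = ∫ τ in Set.Ioo (0:ℝ) t,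
            (t - τ) ^ (β - 1) / Real.Gamma β * (M₂ ^ (l * σ / (1 - l * σ)) * τ ^ γ₂) := by
      refine MeasureTheory.setIntegral_congr_fun measurableSet_Ioo fun τ hτ => ?_
      rw [hG]; simp [hτ.1]
    rw [hcong, hF t, if_pos ht]
    exact aux_int β γ₂ γ₁ l _ _ hβ hγ₂pos hl hsum₂ e₁pos.le hconst₂ ht
end

section
/- Let n ≥ 1, p, q ∈ [1,∞), α, β, λ, σ > 0 satisfy 2pα < n+2, (n+2-2pα)q²σ ≤ (n+2-2qβ)p²λ, and σ > μ(λ) := 2pβ/(n+2-2pα) + (n+2)/((n+2-2pα)λ). Define r₀ = (n+2)(λσ-1)/(2(β+ασ)λ) and s₀ = (n+2)(λσ-1)/(2(α+βλ)σ). Then λσ > 1, r₀ > p, and s₀ > q. -/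
set_option maxHeartbeats 1000000


theorem stmt_13 (n : ℕ) (hn : 1 ≤ n) (p q α β l σ : ℝ)
    (hp : 1 ≤ p) (hq : 1 ≤ q) (hα : 0 < α) (hβ : 0 < β) (hl : 0 < l) (hσ : 0 < σ)
    (hpα : 2 * p * α < n + 2)
    (hnorm : (n + 2 - 2 * p * α) * q ^ 2 * σ ≤ (n + 2 - 2 * q * β) * p ^ 2 * l)
    (hμ : σ > 2 * p * β / (n + 2 - 2 * p * α) + (n + 2) / ((n + 2 - 2 * p * α) * l))
    (r₀ s₀ : ℝ)
    (hr₀ : r₀ = (n + 2) * (l * σ - 1) / (2 * (β + α * σ) * l))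
    (hs₀ : s₀ = (n + 2) * (l * σ - 1) / (2 * (α + β * l) * σ)) :
    1 < l * σ ∧ p < r₀ ∧ q < s₀ := by
  have hp0 : (0:ℝ) < p := lt_of_lt_of_le one_pos hp
  have hq0 : (0:ℝ) < q := lt_of_lt_of_le one_pos hq
  have hA : (0:ℝ) < (n:ℝ) + 2 - 2 * p * α := by linarith
  -- B > 0
  have hB : (0:ℝ) < (n:ℝ) + 2 - 2 * q * β := by
    nlinarith [hnorm, mul_pos (mul_pos hA (mul_pos hq0 hq0)) hσ,
      mul_pos (mul_pos hp0 hp0) hl]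
  -- h1 : A * l * σ > 2*p*β*l + (n+2)
  have h1 : 2 * p * β * l + ((n:ℝ) + 2) < ((n:ℝ) + 2 - 2 * p * α) * l * σ := by
    have h3 : (2 * p * β / ((n:ℝ) + 2 - 2 * p * α)
          + ((n:ℝ) + 2) / (((n:ℝ) + 2 - 2 * p * α) * l))
          * ((((n:ℝ) + 2 - 2 * p * α)) * l) < σ * ((((n:ℝ) + 2 - 2 * p * α)) * l) :=
      mul_lt_mul_of_pos_right hμ (by positivity)
    have h4 : (2 * p * β / ((n:ℝ) + 2 - 2 * p * α)) * ((((n:ℝ) + 2 - 2 * p * α)) * l)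
        = 2 * p * β * l := by field_simp
    have h5 : (((n:ℝ) + 2) / (((n:ℝ) + 2 - 2 * p * α) * l))
        * ((((n:ℝ) + 2 - 2 * p * α)) * l) = (n:ℝ) + 2 := by field_simp
    rw [add_mul, h4, h5] at h3
    nlinarith [h3]
  have hls : 1 < l * σ := by
    have h2 : ((n:ℝ) + 2) * 1 < ((n:ℝ) + 2) * (l * σ) := by
      nlinarith [h1, mul_pos (mul_pos hp0 hα) (mul_pos hl hσ), mul_pos (mul_pos hp0 hβ) hl]
    exact lt_of_mul_lt_mul_left h2 (by positivity)
  have hAσβ : (0:ℝ) < ((n:ℝ) + 2 - 2 * p * α) * σ - 2 * p * β := by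
    nlinarith [h1, hl]
  refine ⟨hls, ?_, ?_⟩
  · rw [hr₀, lt_div_iff₀ (by positivity : (0:ℝ) < 2 * (β + α * σ) * l)]
    nlinarith [h1]
  · have hkey2 : 2 * q * α * σ + ((n:ℝ) + 2) < ((n:ℝ) + 2 - 2 * q * β) * l * σ := by
      rcases le_or_gt (((n:ℝ) + 2 - 2 * p * α) * q * σ) (((n:ℝ) + 2) * p) with hc | hc
      · -- case A q σ ≤ (n+2) p
        have hX : (0:ℝ) ≤ ((n:ℝ) + 2) * p - ((n:ℝ) + 2 - 2 * p * α) * q * σ := by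
          linarith
        have hkey : (2 * q * α * σ + ((n:ℝ) + 2)) * (((n:ℝ) + 2 - 2 * p * α) * σ - 2 * p * β)
            ≤ ((n:ℝ) + 2 - 2 * q * β) * ((n:ℝ) + 2) * σ := by
          nlinarith [mul_nonneg (by positivity : (0:ℝ) ≤ α * σ + β) hX]
        have hmul : ((n:ℝ) + 2 - 2 * q * β) * ((n:ℝ) + 2) * σ
            < ((n:ℝ) + 2 - 2 * q * β) * l * σ * (((n:ℝ) + 2 - 2 * p * α) * σ - 2 * p * β) := by
          nlinarith [mul_lt_mul_of_pos_left h1 (by positivity :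
            (0:ℝ) < ((n:ℝ) + 2 - 2 * q * β) * σ)]
        have := lt_of_le_of_lt hkey hmul
        exact lt_of_mul_lt_mul_right this (le_of_lt hAσβ)
      · -- case A q σ > (n+2) p
        have h6 : ((n:ℝ) + 2 - 2 * p * α) * q ^ 2 * σ * σ
            ≤ ((n:ℝ) + 2 - 2 * q * β) * p ^ 2 * l * σ :=
          mul_le_mul_of_nonneg_right hnorm (le_of_lt hσ)
        have h7 : 0 < (((n:ℝ) + 2 - 2 * p * α) * q * σ - ((n:ℝ) + 2) * p) * (q * σ + p) :=
          mul_pos (by linarith) (by positivity)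
        have h8 : (2 * q * α * σ + ((n:ℝ) + 2)) * p ^ 2
            < ((n:ℝ) + 2 - 2 * q * β) * l * σ * p ^ 2 := by
          nlinarith [h6, h7]
        exact lt_of_mul_lt_mul_right h8 (by positivity)
    rw [hs₀, lt_div_iff₀ (by positivity : (0:ℝ) < 2 * (α + β * l) * σ)]
    nlinarith [hkey2]
end
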